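/- arXiv:2204.02021 — 4 statements merged into one kernel-verified Lean document; each statement's English description precedes it below -/
import Mathlib

section
/- Let d ≥ 1 and let m be a positive integer. If x and y are two distinct vertices of Z^d with ‖x‖₁ = ‖y‖₁ = m, then there exist two paths π_x and π_y in Z^d, from x to 0 and from y to 0 respectively, each of length exactly m, such that the only vertex common to π_x and π_y is 0, and such that x is the only vertex of π_x with ℓ¹-norm ≥ m, and y is the only vertex of π_y with ℓ¹-norm ≥ m. -/
open Finset

private lemma waterfill {d : ℕ} (w : Fin d → ℤ) (q : Fin d → ℕ) (hw : ∀ j, 0 ≤ w j)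
    (hq : Function.Injective q) (s : Finset (Fin d)) :
    ∀ (t : ℤ), 0 ≤ t → t ≤ ∑ j ∈ s, w j →
      ∑ j ∈ s, min (w j) (max 0 (t - ∑ j' ∈ s.filter (fun j' => q j < q j'), w j')) = t := by
  induction s using Finset.strongInduction with
  | _ s ih =>
    intro t h0 ht
    rcases s.eq_empty_or_nonempty with rfl | hs
    · simp at ht ⊢; omega
    obtain ⟨j0, hj0s, hmin⟩ := s.exists_min_image q hs
    set s' := s.erase j0 with hs'def
    have hj0s' : j0 ∉ s' := Finset.notMem_erase _ _
    have hins : s = insert j0 s' := (Finset.insert_erase hj0s).symm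
    have hlt : ∀ j ∈ s', q j0 < q j := by
      intro j hj
      exact (hmin j (Finset.mem_of_mem_erase hj)).lt_of_ne
        (fun h => (Finset.ne_of_mem_erase hj) (hq h.symm))
    have hfilt : ∀ j ∈ s', s.filter (fun j' => q j < q j') = s'.filter (fun j' => q j < q j') := by
      intro j hj
      rw [hins, Finset.filter_insert, if_neg (by have := hlt j hj; omega)]
    have hfilt0 : s.filter (fun j' => q j0 < q j') = s' := by
      ext a
      simp only [Finset.mem_filter, hs'def, Finset.mem_erase]
      constructor
      · rintro ⟨ha, hqa⟩
        exact ⟨fun h => by subst h; omega, ha⟩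
      · rintro ⟨hne, ha⟩
        exact ⟨ha, hlt a (by rw [hs'def]; exact Finset.mem_erase.2 ⟨hne, ha⟩)⟩
    rw [hins, Finset.sum_insert hj0s']
    rw [← hins, hfilt0]
    have hsum' : ∑ j ∈ s', min (w j) (max 0 (t - ∑ j' ∈ s.filter (fun j' => q j < q j'), w j')) = ∑ j ∈ s', min (w j) (max 0 (t - ∑ j' ∈ s'.filter (fun j' => q j < q j'), w j')) :=
      Finset.sum_congr rfl (fun j hj => by rw [hfilt j hj])
    rw [hsum']
    set T' := ∑ j ∈ s', w j with hT'
    have hT'nonneg : 0 ≤ T' := Finset.sum_nonneg (fun j _ => hw j)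
    have hsubR : ∀ j ∈ s', (∑ j' ∈ s'.filter (fun j' => q j < q j'), w j') + w j ≤ T' := by
      intro j hj
      have hnm : j ∉ s'.filter (fun j' => q j < q j') := by
        simp only [Finset.mem_filter]; omega
      have : ∑ j' ∈ insert j (s'.filter (fun j' => q j < q j')), w j' ≤ T' := by
        apply Finset.sum_le_sum_of_subset_of_nonneg
        · intro a ha
          rcases Finset.mem_insert.1 ha with rfl | ha
          · exact hj
          · exact Finset.mem_of_mem_filter a ha
        · exact fun a _ _ => hw a
      rwa [Finset.sum_insert hnm, add_comm] at this
    rcases le_or_gt t T' with hcase | hcase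
    · have h1 : min (w j0) (max 0 (t - T')) = 0 := by
        have : max 0 (t - T') = 0 := by omega
        rw [this]; exact min_eq_right (hw j0)
      rw [h1, zero_add]
      exact ih s' (Finset.erase_ssubset hj0s) t h0 hcase
    · have hterm : ∀ j ∈ s', min (w j) (max 0 (t - ∑ j' ∈ s'.filter (fun j' => q j < q j'), w j')) = w j := by
        intro j hj
        have h1 := hsubR j hj
        have h2 : 0 ≤ ∑ j' ∈ s'.filter (fun j' => q j < q j'), w j' :=
          Finset.sum_nonneg (fun a _ => hw a)
        have := hw j
        omega
      have hsum2 : ∑ j ∈ s', min (w j) (max 0 (t - ∑ j' ∈ s'.filter (fun j' => q j < q j'), w j')) = T' := by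
        rw [Finset.sum_congr rfl hterm]
      have htle : t ≤ w j0 + T' := by
        rw [hins, Finset.sum_insert hj0s'] at ht
        have : ∑ j ∈ s', w j = T' := rfl
        omega
      omega

private noncomputable def Rsum {d : ℕ} (w : Fin d → ℤ) (q : Fin d → ℕ) (j : Fin d) : ℤ :=
  ∑ j' ∈ Finset.univ.filter (fun j' => q j < q j'), w j'

private noncomputable def keep {d : ℕ} (w : Fin d → ℤ) (q : Fin d → ℕ) (t : ℤ) (j : Fin d) : ℤ :=
  min (w j) (max 0 (t - Rsum w q j))

private noncomputable def pathOf {d : ℕ} (v : Fin d → ℤ) (q : Fin d → ℕ) (m i : ℕ) (j : Fin d) : ℤ :=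
  (v j).sign * keep (fun j => |v j|) q ((m : ℤ) - i) j

section
variable {d : ℕ} (v : Fin d → ℤ) (q : Fin d → ℕ) (m : ℕ)

private lemma Rsum_nonneg (j : Fin d) : 0 ≤ Rsum (fun j => |v j|) q j :=
  Finset.sum_nonneg (fun a _ => abs_nonneg _)

private lemma keep_nonneg (t : ℤ) (j : Fin d) : 0 ≤ keep (fun j => |v j|) q t j :=
  le_min (abs_nonneg _) (le_max_left _ _)

private lemma keep_le (t : ℤ) (j : Fin d) : keep (fun j => |v j|) q t j ≤ |v j| :=
  min_le_left _ _

private lemma keep_zero_of_eq_zero {j : Fin d} (h : v j = 0) (t : ℤ) :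
    keep (fun j => |v j|) q t j = 0 := by
  have h1 := keep_le v q t j
  have h2 := keep_nonneg v q t j
  rw [h] at h1; simp at h1; omega

private lemma keep_mono {t t' : ℤ} (h : t ≤ t') (j : Fin d) :
    keep (fun j => |v j|) q t j ≤ keep (fun j => |v j|) q t' j := by
  unfold keep
  exact min_le_min le_rfl (max_le_max le_rfl (by omega))

private lemma abs_pathOf (i : ℕ) (j : Fin d) :
    |pathOf v q m i j| = keep (fun j => |v j|) q ((m : ℤ) - i) j := by
  unfold pathOf
  rcases eq_or_ne (v j) 0 with h | h
  · rw [keep_zero_of_eq_zero v q h, h]; simp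
  · rw [abs_mul, Int.abs_sign_of_ne_zero h, one_mul,
      abs_of_nonneg (keep_nonneg v q _ j)]

private lemma sum_keep (hq : Function.Injective q) (hv : ∑ j, |v j| = (m : ℤ))
    (t : ℤ) (h0 : 0 ≤ t) (h1 : t ≤ (m : ℤ)) :
    ∑ j, keep (fun j => |v j|) q t j = t := by
  have := waterfill (fun j => |v j|) q (fun j => abs_nonneg _) hq Finset.univ t h0
    (by simpa [hv] using h1)
  simpa [keep, Rsum] using this

private lemma sum_abs_pathOf (hq : Function.Injective q) (hv : ∑ j, |v j| = (m : ℤ))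
    (i : ℕ) (hi : i ≤ m) :
    ∑ j, |pathOf v q m i j| = (m : ℤ) - i := by
  rw [Finset.sum_congr rfl (fun j _ => abs_pathOf v q m i j)]
  exact sum_keep v q m hq hv _ (by omega) (by omega)

private lemma pathOf_zero (hv : ∑ j, |v j| = (m : ℤ)) : pathOf v q m 0 = v := by
  funext j
  unfold pathOf keep
  have hR : Rsum (fun j => |v j|) q j + |v j| ≤ (m : ℤ) := by
    have hnm : j ∉ Finset.univ.filter (fun j' => q j < q j') := by simp
    have hle : ∑ j' ∈ insert j (Finset.univ.filter (fun j' => q j < q j')), |v j'| ≤ ∑ j', |v j'| :=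
      Finset.sum_le_sum_of_subset_of_nonneg (Finset.subset_univ _) (fun a _ _ => abs_nonneg _)
    rw [Finset.sum_insert hnm, hv] at hle
    have hre : Rsum (fun j => |v j|) q j = ∑ j' ∈ Finset.univ.filter (fun j' => q j < q j'), |v j'| := rfl
    omega
  have h2 := Rsum_nonneg v q j
  have h3 := abs_nonneg (v j)
  have : min (|v j|) (max 0 ((m : ℤ) - (0 : ℕ) - Rsum (fun j => |v j|) q j)) = |v j| := by
    push_cast; omega
  rw [this, Int.sign_mul_abs]

private lemma pathOf_last : pathOf v q m m = 0 := by
  funext j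
  unfold pathOf keep
  have h2 := Rsum_nonneg v q j
  have h3 := abs_nonneg (v j)
  have : min (|v j|) (max 0 ((m : ℤ) - (m : ℕ) - Rsum (fun j => |v j|) q j)) = 0 := by
    push_cast; omega
  rw [this, mul_zero]
  rfl

private lemma pathOf_step (hq : Function.Injective q) (hv : ∑ j, |v j| = (m : ℤ))
    (i : ℕ) (hi : i < m) :
    ∑ j, |pathOf v q m (i + 1) j - pathOf v q m i j| = 1 := by
  have key : ∀ j, |pathOf v q m (i + 1) j - pathOf v q m i j| =
      keep (fun j => |v j|) q ((m : ℤ) - i) j - keep (fun j => |v j|) q ((m : ℤ) - (i + 1 : ℕ)) j := by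
    intro j
    have hmono := keep_mono v q (show ((m : ℤ) - (i + 1 : ℕ)) ≤ (m : ℤ) - i by push_cast; omega) j
    unfold pathOf
    rcases eq_or_ne (v j) 0 with h | h
    · rw [keep_zero_of_eq_zero v q h, keep_zero_of_eq_zero v q h]
      simp
    · rw [← mul_sub, abs_mul, Int.abs_sign_of_ne_zero h, one_mul,
        abs_of_nonpos (by omega), neg_sub]
  rw [Finset.sum_congr rfl (fun j _ => key j), Finset.sum_sub_distrib,
    sum_keep v q m hq hv _ (by omega) (by omega),
    sum_keep v q m hq hv _ (by push_cast; omega) (by push_cast; omega)]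
  push_cast; ring

private lemma Rsum_of_min {w : Fin d → ℤ} {k : Fin d} (hk : ∀ j, j ≠ k → q k < q j) :
    Rsum w q k = (∑ j, w j) - w k := by
  unfold Rsum
  have hfe : Finset.univ.filter (fun j' => q k < q j') = Finset.univ.erase k := by
    ext a
    simp only [Finset.mem_filter, Finset.mem_erase, Finset.mem_univ, true_and, and_true]
    constructor
    · intro h hak; subst hak; omega
    · intro h; exact hk a h
  rw [hfe]
  have := Finset.sum_erase_add Finset.univ w (Finset.mem_univ k)
  omega

private lemma Rsum_of_max {w : Fin d → ℤ} {k : Fin d} (hk : ∀ j, j ≠ k → q j < q k) :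
    Rsum w q k = 0 := by
  unfold Rsum
  have hfe : Finset.univ.filter (fun j' => q k < q j') = ∅ := by
    ext a
    simp only [Finset.mem_filter, Finset.mem_univ, true_and, Finset.notMem_empty, iff_false]
    intro h
    rcases eq_or_ne a k with rfl | hne
    · omega
    · have := hk a hne; omega
  rw [hfe, Finset.sum_empty]

end

/-- existence of two paths from `x` and `y` to `0`, each of length `m`,
meeting only at `0`, with `x` (resp. `y`) the only vertex of ℓ¹-norm ≥ m. -/
theorem stmt0 (d m : ℕ) (hd : 1 ≤ d) (hm : 0 < m)
    (x y : Fin d → ℤ) (hxy : x ≠ y)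
    (hx : ∑ i, |x i| = (m : ℤ)) (hy : ∑ i, |y i| = (m : ℤ)) :
    ∃ πx πy : ℕ → (Fin d → ℤ),
      πx 0 = x ∧ πx m = 0 ∧ πy 0 = y ∧ πy m = 0 ∧
      (∀ i < m, ∑ j, |πx (i + 1) j - πx i j| = 1) ∧
      (∀ i < m, ∑ j, |πy (i + 1) j - πy i j| = 1) ∧
      (∀ i ≤ m, ∀ j ≤ m, πx i = πy j → πx i = 0) ∧
      (∀ i ≤ m, (m : ℤ) ≤ ∑ j, |πx i j| → πx i = x) ∧
      (∀ i ≤ m, (m : ℤ) ≤ ∑ j, |πy i j| → πy i = y) := by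
  -- choose a coordinate k where y k lies outside the sign-interval of x k
  have hex : ∃ k, y k < min 0 (x k) ∨ max 0 (x k) < y k := by
    by_contra hcon
    push_neg at hcon
    apply hxy
    funext j
    have habs : ∀ j, |y j| ≤ |x j| := by
      intro j
      have h1 := (hcon j).1
      have h2 := (hcon j).2
      have n1 := neg_abs_le (x j)
      have n2 := le_abs_self (x j)
      exact abs_le.2 ⟨by omega, by omega⟩
    have hsum : ∑ j, |y j| = ∑ j, |x j| := by rw [hx, hy]
    have heq := (Finset.sum_eq_sum_iff_of_le (fun i _ => habs i)).1 hsum j (Finset.mem_univ j)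
    have h1 := (hcon j).1
    have h2 := (hcon j).2
    rcases le_total 0 (x j) with h | h
    · have hy0 : 0 ≤ y j := by omega
      rw [abs_of_nonneg hy0, abs_of_nonneg h] at heq
      omega
    · have hy0 : y j ≤ 0 := by omega
      rw [abs_of_nonpos hy0, abs_of_nonpos h] at heq
      omega
  obtain ⟨k, hk⟩ := hex
  classical
  let qx : Fin d → ℕ := fun j => if j = k then 0 else (j : ℕ) + 1
  let qy : Fin d → ℕ := fun j => if j = k then d + 1 else (j : ℕ) + 1
  have hqxmin : ∀ j, j ≠ k → qx k < qx j := by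
    intro j hj
    simp only [qx, if_pos rfl, if_neg hj]
    omega
  have hqymax : ∀ j, j ≠ k → qy j < qy k := by
    intro j hj
    have := j.isLt
    simp only [qy, if_pos rfl, if_neg hj]
    omega
  have hqxinj : Function.Injective qx := by
    intro a b hab
    simp only [qx] at hab
    by_cases ha : a = k <;> by_cases hb : b = k
    · rw [ha, hb]
    · rw [if_pos ha, if_neg hb] at hab; omega
    · rw [if_neg ha, if_pos hb] at hab; omega
    · rw [if_neg ha, if_neg hb] at hab; exact Fin.ext (by omega)
  have hqyinj : Function.Injective qy := by
    intro a b hab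
    simp only [qy] at hab
    by_cases ha : a = k <;> by_cases hb : b = k
    · rw [ha, hb]
    · rw [if_pos ha, if_neg hb] at hab; have := b.isLt; omega
    · rw [if_neg ha, if_pos hb] at hab; have := a.isLt; omega
    · rw [if_neg ha, if_neg hb] at hab; exact Fin.ext (by omega)
  refine ⟨pathOf x qx m, pathOf y qy m,
    pathOf_zero x qx m hx, pathOf_last x qx m,
    pathOf_zero y qy m hy, pathOf_last y qy m,
    fun i hi => pathOf_step x qx m hqxinj hx i hi,
    fun i hi => pathOf_step y qy m hqyinj hy i hi,
    ?_, ?_, ?_⟩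
  · -- disjointness
    intro i hi j hj heq
    have ni := sum_abs_pathOf x qx m hqxinj hx i hi
    have nj := sum_abs_pathOf y qy m hqyinj hy j hj
    have hij : i = j := by
      rw [heq] at ni
      omega
    subst hij
    rcases eq_or_lt_of_le hi with hcase | hlt
    · rw [hcase]; exact pathOf_last x qx m
    exfalso
    have ht1 : (1 : ℤ) ≤ (m : ℤ) - i := by omega
    have htm : (m : ℤ) - i ≤ (m : ℤ) := by omega
    have hzk := congrFun heq k
    have hax := abs_pathOf x qx m i k
    have hay := abs_pathOf y qy m i k
    have hRx : Rsum (fun j => |x j|) qx k = (m : ℤ) - |x k| := by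
      rw [Rsum_of_min qx hqxmin, hx]
    have hRy : Rsum (fun j => |y j|) qy k = 0 := Rsum_of_max qy hqymax
    have hkx : keep (fun j => |x j|) qx ((m : ℤ) - i) k
        = min (|x k|) (max 0 (((m : ℤ) - i) - ((m : ℤ) - |x k|))) := by
      unfold keep; rw [hRx]
    have hky : keep (fun j => |y j|) qy ((m : ℤ) - i) k = min (|y k|) ((m : ℤ) - i) := by
      unfold keep; rw [hRy]
      congr 1
      omega
    have hbpos : 1 ≤ |y k| := by
      have n1 := neg_abs_le (y k)
      have n2 := le_abs_self (y k)
      rcases hk with h | h <;> omega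
    have hBm : |y k| ≤ (m : ℤ) := by
      rw [← hy]
      exact Finset.single_le_sum (fun j _ => abs_nonneg (y j)) (Finset.mem_univ k)
    have hKy : |pathOf x qx m i k| = min (|y k|) ((m : ℤ) - i) := by
      rw [hzk, hay, hky]
    have hKx : |pathOf x qx m i k|
        = min (|x k|) (max 0 (((m : ℤ) - i) - ((m : ℤ) - |x k|))) := by
      rw [hax, hkx]
    have hKpos : 1 ≤ |pathOf x qx m i k| := by rw [hKy]; omega
    have hxk0 : x k ≠ 0 := by
      intro h0
      rw [hax, keep_zero_of_eq_zero x qx h0] at hKpos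
      omega
    -- sign equality
    have hkeq : keep (fun j => |x j|) qx ((m : ℤ) - i) k
        = keep (fun j => |y j|) qy ((m : ℤ) - i) k := by
      rw [← hax, ← hay, hzk]
    have h1 : (x k).sign * keep (fun j => |x j|) qx ((m : ℤ) - i) k
        = (y k).sign * keep (fun j => |y j|) qy ((m : ℤ) - i) k := hzk
    rw [← hkeq] at h1
    have hkne : keep (fun j => |x j|) qx ((m : ℤ) - i) k ≠ 0 := by
      rw [← hax]
      omega
    have hsigneq : (x k).sign = (y k).sign := mul_right_cancel₀ hkne h1
    have hBA : |x k| < |y k| := by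
      rcases hk with h | h
      · have hy' : y k < 0 := by omega
        have hx' : x k < 0 := by
          rcases lt_trichotomy (x k) 0 with h' | h' | h'
          · exact h'
          · exact absurd h' hxk0
          · rw [Int.sign_eq_one_iff_pos.2 h', Int.sign_eq_neg_one_iff_neg.2 hy'] at hsigneq
            omega
        rw [abs_of_neg hx', abs_of_neg hy']
        omega
      · have hy' : 0 < y k := by omega
        have hx' : 0 < x k := by
          rcases lt_trichotomy (x k) 0 with h' | h' | h'
          · rw [Int.sign_eq_neg_one_iff_neg.2 h', Int.sign_eq_one_iff_pos.2 hy'] at hsigneq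
            omega
          · exact absurd h' hxk0
          · exact h'
        rw [abs_of_pos hx', abs_of_pos hy']
        omega
    omega
  · intro i hi hge
    have := sum_abs_pathOf x qx m hqxinj hx i hi
    have hi0 : i = 0 := by omega
    subst hi0
    exact pathOf_zero x qx m hx
  · intro i hi hge
    have := sum_abs_pathOf y qy m hqyinj hy i hi
    have hi0 : i = 0 := by omega
    subst hi0
    exact pathOf_zero y qy m hy
end

section
/- Let γ = (v_0, …, v_m) be a path in Z^d and let N ≥ 1. For v ∈ Z^d let s(v) denote the unique s ∈ Z^d with v ∈ B^∞_{s,N}, where B^∞_{s,N} = {w ∈ Z^d : (s−1/2)N ≤ w_i < (s+1/2)N for all i}. Let A(γ) be the set of distinct values s(v_i) for 0 ≤ i ≤ m, and let |A(γ)| be its cardinality. Then the number of edges of γ satisfies m ≥ N(|A(γ)|/3^d − 1). -/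
/-- lattice-animal bound `m ≥ N(|A(γ)|/3^d − 1)` for the set of
meta-cubes visited by a path `γ` with `m` edges. -/
theorem stmt3 (d m N : ℕ) (hN : 1 ≤ N)
    (γ : ℕ → (Fin d → ℤ))
    (hpath : ∀ i < m, ∑ j, |γ (i + 1) j - γ i j| = 1)
    (sfun : (Fin d → ℤ) → (Fin d → ℤ))
    (hs : ∀ v : Fin d → ℤ, ∀ i : Fin d,
      (2 * sfun v i - 1) * (N : ℤ) ≤ 2 * v i ∧ 2 * v i < (2 * sfun v i + 1) * (N : ℤ)) :
    (N : ℝ) * (((Finset.image (fun i => sfun (γ i)) (Finset.range (m + 1))).card : ℝ) / 3 ^ d - 1)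
      ≤ (m : ℝ) := by
  -- single-step coordinate bound
  have hstep : ∀ j : Fin d, ∀ k, k < m → |γ (k + 1) j - γ k j| ≤ 1 := by
    intro j k hk
    calc |γ (k + 1) j - γ k j| ≤ ∑ j', |γ (k + 1) j' - γ k j'| :=
          Finset.single_le_sum (f := fun j' => |γ (k + 1) j' - γ k j'|) (fun j' _ => abs_nonneg _) (Finset.mem_univ j)
      _ = 1 := hpath k hk
  -- coordinate displacement bound
  have hcoord : ∀ j : Fin d, ∀ i0 i, i0 ≤ i → i ≤ m →
      |γ i j - γ i0 j| ≤ ((i - i0 : ℕ) : ℤ) := by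
    intro j i0 i h0 hm
    induction i, h0 using Nat.le_induction with
    | base => simp
    | succ k hk ih =>
      have h1 := ih (Nat.le_of_succ_le hm)
      have h2 := hstep j k (Nat.lt_of_succ_le hm)
      have h3 : |γ (k + 1) j - γ i0 j| ≤ |γ (k + 1) j - γ k j| + |γ k j - γ i0 j| :=
        abs_sub_le _ _ _
      have h4 : ((k + 1 - i0 : ℕ) : ℤ) = ((k - i0 : ℕ) : ℤ) + 1 := by omega
      linarith
  -- meta-cube displacement within a block of length < N
  have hds : ∀ i, i ≤ m → ∀ j : Fin d,
      |sfun (γ i) j - sfun (γ (i / N * N)) j| ≤ 1 := by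
    intro i hm j
    have h0 : i / N * N ≤ i := Nat.div_mul_le_self _ _
    have hlt : i - i / N * N < N := by
      have h1 := Nat.mod_lt i (show 0 < N by omega)
      have h2 := Nat.div_add_mod i N
      have h3 : N * (i / N) = i / N * N := Nat.mul_comm _ _
      omega
    have hv := hcoord j (i / N * N) i h0 hm
    have hv' : |γ i j - γ (i / N * N) j| ≤ (N : ℤ) - 1 := by
      have : ((i - i / N * N : ℕ) : ℤ) ≤ (N : ℤ) - 1 := by omega
      linarith
    obtain ⟨ha1, ha2⟩ := hs (γ i) j
    obtain ⟨hb1, hb2⟩ := hs (γ (i / N * N)) j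
    have hNpos : (0 : ℤ) < (N : ℤ) := by exact_mod_cast hN
    rw [abs_le] at hv' ⊢
    constructor
    · nlinarith [hv'.1, hv'.2]
    · nlinarith [hv'.1, hv'.2]
  -- subset of a biUnion of 3^d-cubes
  set A := Finset.image (fun i => sfun (γ i)) (Finset.range (m + 1)) with hA
  have hsub : A ⊆ (Finset.range (m / N + 1)).biUnion (fun b =>
      Finset.image (fun ε : Fin d → Fin 3 => fun j => sfun (γ (b * N)) j + (ε j : ℤ) - 1)
        Finset.univ) := by
    intro x hx
    rw [hA, Finset.mem_image] at hx
    obtain ⟨i, hi, rfl⟩ := hx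
    rw [Finset.mem_range] at hi
    have him : i ≤ m := by omega
    rw [Finset.mem_biUnion]
    refine ⟨i / N, ?_, ?_⟩
    · rw [Finset.mem_range]
      have := Nat.div_le_div_right (c := N) him
      omega
    · rw [Finset.mem_image]
      refine ⟨fun j => ⟨(sfun (γ i) j - sfun (γ (i / N * N)) j + 1).toNat, ?_⟩, Finset.mem_univ _, ?_⟩
      · have := hds i him j
        rw [abs_le] at this
        omega
      · funext j
        have := hds i him j
        rw [abs_le] at this
        simp only []
        have h5 : (((sfun (γ i) j - sfun (γ (i / N * N)) j + 1).toNat : ℤ)) =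
            sfun (γ i) j - sfun (γ (i / N * N)) j + 1 := by omega
        rw [h5]
        ring
  -- cardinality bound
  have hcube : ∀ b : ℕ, (Finset.image
      (fun ε : Fin d → Fin 3 => fun j => sfun (γ (b * N)) j + (ε j : ℤ) - 1)
      (Finset.univ : Finset (Fin d → Fin 3))).card ≤ 3 ^ d := by
    intro b
    calc _ ≤ (Finset.univ : Finset (Fin d → Fin 3)).card := Finset.card_image_le
      _ = 3 ^ d := by simp
  have hcard : A.card ≤ (m / N + 1) * 3 ^ d := by
    calc A.card ≤ _ := Finset.card_le_card hsub
      _ ≤ ∑ b ∈ Finset.range (m / N + 1), (Finset.image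
            (fun ε : Fin d → Fin 3 => fun j => sfun (γ (b * N)) j + (ε j : ℤ) - 1)
            Finset.univ).card := Finset.card_biUnion_le
      _ ≤ ∑ _b ∈ Finset.range (m / N + 1), 3 ^ d :=
            Finset.sum_le_sum (fun b _ => hcube b)
      _ = (m / N + 1) * 3 ^ d := by simp [Finset.sum_const, mul_comm]
  -- final arithmetic
  have hnat : N * A.card ≤ (m + N) * 3 ^ d := by
    calc N * A.card ≤ N * ((m / N + 1) * 3 ^ d) := Nat.mul_le_mul_left _ hcard
      _ = (N * (m / N) + N) * 3 ^ d := by ring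
      _ ≤ (m + N) * 3 ^ d := by
          have := Nat.div_mul_le_self m N
          have : N * (m / N) ≤ m := by rw [mul_comm]; exact Nat.div_mul_le_self m N
          exact Nat.mul_le_mul_right _ (by omega)
  have hreal : (N : ℝ) * (A.card : ℝ) ≤ ((m : ℝ) + (N : ℝ)) * 3 ^ d := by
    exact_mod_cast hnat
  have h3 : (0 : ℝ) < 3 ^ d := by positivity
  rw [show (N : ℝ) * ((A.card : ℝ) / 3 ^ d - 1) =
      ((N : ℝ) * (A.card : ℝ) - (N : ℝ) * 3 ^ d) / 3 ^ d from by field_simp,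
    div_le_iff₀ h3]
  nlinarith [hreal]
end

section
/- Let X and X' be paths in a weighted graph from 0 to x with edge weights T and T* respectively, where T*(e) ≤ T(e) for all e, T*(e) < T(e) exactly for e in a finite set E, with all edges of E lying on a path γ that is a geodesic for T. If γ* is a geodesic from 0 to x for T* and if there is an edge of E not on γ*, then a contradiction arises; consequently every geodesic from 0 to x for T* contains all edges of E. Formally: suppose γ is a T-geodesic from 0 to x, E ⊆ edges(γ), T*(e) < T(e) for all e ∈ E, T* = T off E, and γ* is a T*-geodesic from 0 to x. Then E ⊆ edges(γ*). -/
/-- Vertices of the hypercubic lattice. -/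
abbrev Vtx (d : ℕ) := Fin d → ℤ

/-- ℓ¹-distance between two vertices. -/
def dist1 {d : ℕ} (a b : Vtx d) : ℤ := ∑ i, |a i - b i|

/-- A (nearest-neighbour) path from `a` to `b`, given as its list of vertices. -/
def IsLatPath {d : ℕ} (π : List (Vtx d)) (a b : Vtx d) : Prop :=
  π ≠ [] ∧ π.head? = some a ∧ π.getLast? = some b ∧
    List.Chain' (fun u v => dist1 u v = 1) π

/-- The (unordered) edges of a path. -/
def pathEdges {d : ℕ} (π : List (Vtx d)) : List (Sym2 (Vtx d)) :=
  List.zipWith (fun a b => s(a, b)) π π.tail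

/-- Total weight of a path for edge weights `T`. -/
def pathWeight {d : ℕ} (T : Sym2 (Vtx d) → ℝ) (π : List (Vtx d)) : ℝ :=
  ((pathEdges π).map T).sum

/-- A geodesic from `a` to `b` for the weights `T`. -/
def IsGeodesic {d : ℕ} (T : Sym2 (Vtx d) → ℝ) (a b : Vtx d) (π : List (Vtx d)) : Prop :=
  IsLatPath π a b ∧ ∀ π', IsLatPath π' a b → pathWeight T π ≤ pathWeight T π'

namespace Stmt6Aux

variable {d : ℕ}

lemma pathEdges_cons_cons (a b : Vtx d) (l : List (Vtx d)) :
    pathEdges (a :: b :: l) = s(a, b) :: pathEdges (b :: l) := rfl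

lemma pathEdges_append (l1 : List (Vtx d)) (z : Vtx d) (l2 : List (Vtx d)) :
    pathEdges (l1 ++ z :: l2) = pathEdges (l1 ++ [z]) ++ pathEdges (z :: l2) := by
  induction l1 with
  | nil => simp [pathEdges]
  | cons a t ih =>
    cases t with
    | nil => simp [pathEdges]
    | cons b t' =>
      simpa [pathEdges_cons_cons] using ih

lemma pathWeight_append (T : Sym2 (Vtx d) → ℝ) (l1 : List (Vtx d)) (z : Vtx d)
    (l2 : List (Vtx d)) :
    pathWeight T (l1 ++ z :: l2) = pathWeight T (l1 ++ [z]) + pathWeight T (z :: l2) := by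
  unfold pathWeight
  rw [pathEdges_append, List.map_append, List.sum_append]

lemma mem_of_mem_pathEdges {l : List (Vtx d)} {e : Sym2 (Vtx d)} (he : e ∈ pathEdges l)
    {v : Vtx d} (hv : v ∈ e) : v ∈ l := by
  induction l with
  | nil => simp [pathEdges] at he
  | cons a t ih =>
    cases t with
    | nil => simp [pathEdges] at he
    | cons b t' =>
      rw [pathEdges_cons_cons] at he
      rcases List.mem_cons.1 he with h | h
      · subst h
        rcases Sym2.mem_iff.1 hv with h | h
        · simp [h]
        · simp [h]
      · exact List.mem_cons_of_mem _ (ih h)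

lemma nodup_pathEdges {l : List (Vtx d)} (h : l.Nodup) : (pathEdges l).Nodup := by
  induction l with
  | nil => simp [pathEdges]
  | cons a t ih =>
    cases t with
    | nil => simp [pathEdges]
    | cons b t' =>
      rw [pathEdges_cons_cons]
      rcases List.nodup_cons.1 h with ⟨ha, ht⟩
      refine List.nodup_cons.2 ⟨?_, ih ht⟩
      intro hmem
      exact ha (mem_of_mem_pathEdges hmem (by simp))

lemma exists_dup (l : List (Vtx d)) (h : ¬ l.Nodup) :
    ∃ (A : List (Vtx d)) (z : Vtx d) (B C : List (Vtx d)),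
      l = A ++ z :: (B ++ z :: C) := by
  induction l with
  | nil => exact absurd List.nodup_nil h
  | cons a t ih =>
    by_cases hat : a ∈ t
    · obtain ⟨B, C, rfl⟩ := List.append_of_mem hat
      exact ⟨[], a, B, C, rfl⟩
    · have ht : ¬ t.Nodup := fun hn => h (List.nodup_cons.2 ⟨hat, hn⟩)
      obtain ⟨A, z, B, C, rfl⟩ := ih ht
      exact ⟨a :: A, z, B, C, rfl⟩

lemma surgery (T : Sym2 (Vtx d) → ℝ) (x : Vtx d) (A B C : List (Vtx d)) (z : Vtx d)
    (hg : IsGeodesic T 0 x (A ++ z :: (B ++ z :: C))) :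
    IsGeodesic T 0 x (A ++ z :: C) ∧
      ∀ e ∈ pathEdges (A ++ z :: C), e ∈ pathEdges (A ++ z :: (B ++ z :: C)) := by
  obtain ⟨⟨hne, hhd, hlast, hch⟩, hmin⟩ := hg
  set R : Vtx d → Vtx d → Prop := fun u v => dist1 u v = 1 with hR
  -- decompose the chain
  have hch' : List.Chain' R ((A ++ [z]) ++ (B ++ z :: C)) := by
    simpa using hch
  obtain ⟨h1, h2, h3⟩ := List.isChain_append.1 hch'
  have hz : ∀ y ∈ (B ++ z :: C).head?, R z y := by
    intro y hy
    exact h3 z (by simp [List.getLast?_concat]) y hy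
  obtain ⟨hB, hzC, hBz⟩ := List.isChain_append.1 h2
  -- chain for the shortened path
  have hchain0 : List.Chain' R ((A ++ [z]) ++ C) := by
    refine List.isChain_append.2 ⟨h1, (List.isChain_cons.1 hzC).2, ?_⟩
    intro a ha y hy
    simp [List.getLast?_concat] at ha
    subst ha
    exact (List.isChain_cons.1 hzC).1 y hy
  -- chain for the doubled path
  have hchainD : List.Chain' R ((A ++ [z]) ++ (B ++ z :: (B ++ z :: C))) := by
    refine List.isChain_append.2 ⟨h1, ?_, ?_⟩
    · refine List.isChain_append.2 ⟨hB, List.isChain_cons.2 ⟨hz, h2⟩, ?_⟩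
      intro a ha y hy
      simp at hy
      subst hy
      exact hBz a ha z (by simp)
    · intro a ha y hy
      simp [List.getLast?_concat] at ha
      subst ha
      have : (B ++ z :: (B ++ z :: C)).head? = (B ++ z :: C).head? := by
        rw [List.head?_append, List.head?_append]
        simp
      rw [this] at hy
      exact hz y hy
  -- heads agree
  have hhd0 : (A ++ z :: C).head? = some 0 := by
    rw [List.head?_append] at hhd ⊢
    simpa using hhd
  have hhdD : (A ++ z :: (B ++ z :: (B ++ z :: C))).head? = some 0 := by
    rw [List.head?_append] at hhd ⊢
    simpa using hhd
  -- getLast agree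
  have hlast' : (z :: C).getLast? = some x := by
    have hπ : A ++ z :: (B ++ z :: C) = (A ++ (z :: B)) ++ (z :: C) := by simp
    rw [hπ, List.getLast?_append, List.getLast?_cons] at hlast
    simpa [List.getLast?_cons] using hlast
  have hlast0 : (A ++ z :: C).getLast? = some x := by
    rw [List.getLast?_append, hlast']
    rfl
  have hlastD : (A ++ z :: (B ++ z :: (B ++ z :: C))).getLast? = some x := by
    have hD : A ++ z :: (B ++ z :: (B ++ z :: C)) = (A ++ (z :: B) ++ (z :: B)) ++ (z :: C) := by
      simp
    rw [hD, List.getLast?_append, hlast']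
    rfl
  -- path structures
  have hpath0 : IsLatPath (A ++ z :: C) 0 x := by
    refine ⟨by simp, hhd0, hlast0, by simpa using hchain0⟩
  have hpathD : IsLatPath (A ++ z :: (B ++ z :: (B ++ z :: C))) 0 x := by
    refine ⟨by simp, hhdD, hlastD, by simpa using hchainD⟩
  -- weights
  have hwπ : pathWeight T (A ++ z :: (B ++ z :: C)) =
      pathWeight T (A ++ [z]) + (pathWeight T ((z :: B) ++ [z]) + pathWeight T (z :: C)) := by
    rw [pathWeight_append T A z (B ++ z :: C)]
    congr 1
    have : z :: (B ++ z :: C) = (z :: B) ++ z :: C := by simp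
    rw [this, pathWeight_append T (z :: B) z C]
  have hwD : pathWeight T (A ++ z :: (B ++ z :: (B ++ z :: C))) =
      pathWeight T (A ++ [z]) + (pathWeight T ((z :: B) ++ [z]) +
        (pathWeight T ((z :: B) ++ [z]) + pathWeight T (z :: C))) := by
    rw [pathWeight_append T A z (B ++ z :: (B ++ z :: C))]
    congr 1
    have h' : z :: (B ++ z :: (B ++ z :: C)) = (z :: B) ++ z :: (B ++ z :: C) := by simp
    rw [h', pathWeight_append T (z :: B) z (B ++ z :: C)]
    congr 1
    have : z :: (B ++ z :: C) = (z :: B) ++ z :: C := by simp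
    rw [this, pathWeight_append T (z :: B) z C]
  have hw0 : pathWeight T (A ++ z :: C) =
      pathWeight T (A ++ [z]) + pathWeight T (z :: C) := pathWeight_append T A z C
  -- the loop has nonnegative weight
  have hloop : 0 ≤ pathWeight T ((z :: B) ++ [z]) := by
    have := hmin _ hpathD
    rw [hwπ, hwD] at this
    linarith
  have hle : pathWeight T (A ++ z :: C) ≤ pathWeight T (A ++ z :: (B ++ z :: C)) := by
    rw [hw0, hwπ]; linarith
  refine ⟨⟨hpath0, fun π' hπ' => le_trans hle (hmin π' hπ')⟩, ?_⟩
  -- edge containment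
  intro e he
  rw [pathEdges_append A z C, List.mem_append] at he
  rw [pathEdges_append A z (B ++ z :: C), List.mem_append]
  rcases he with h | h
  · exact Or.inl h
  · right
    have : z :: (B ++ z :: C) = (z :: B) ++ z :: C := by simp
    rw [this, pathEdges_append (z :: B) z C, List.mem_append]
    exact Or.inr h

lemma reduce (T : Sym2 (Vtx d) → ℝ) (x : Vtx d) :
    ∀ (n : ℕ) (π : List (Vtx d)), π.length ≤ n → IsGeodesic T 0 x π →
      ∃ π0, IsGeodesic T 0 x π0 ∧ π0.Nodup ∧ ∀ e ∈ pathEdges π0, e ∈ pathEdges π := by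
  intro n
  induction n with
  | zero =>
    intro π hlen hg
    have hnil : π = [] := List.eq_nil_of_length_eq_zero (Nat.le_zero.1 hlen)
    exact absurd hnil hg.1.1
  | succ n ih =>
    intro π hlen hg
    by_cases hnd : π.Nodup
    · exact ⟨π, hg, hnd, fun e he => he⟩
    · obtain ⟨A, z, B, C, rfl⟩ := exists_dup π hnd
      obtain ⟨hg', hsub⟩ := surgery T x A B C z hg
      have hlen' : (A ++ z :: C).length ≤ n := by
        simp only [List.length_append, List.length_cons] at hlen ⊢
        omega
      obtain ⟨π0, h1, h2, h3⟩ := ih _ hlen' hg'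
      exact ⟨π0, h1, h2, fun e he => hsub e (h3 e he)⟩

end Stmt6Aux

/-- if the weights are lowered exactly on a finite set `E` of edges of a
`T`-geodesic `γ`, then every `T*`-geodesic from `0` to `x` contains all edges of `E`. -/
theorem stmt6 {d : ℕ} (T Tstar : Sym2 (Vtx d) → ℝ)
    (x : Vtx d) (γ γstar : List (Vtx d)) (E : Finset (Sym2 (Vtx d)))
    (hgeo : IsGeodesic T 0 x γ)
    (hE : ∀ e ∈ E, e ∈ pathEdges γ)
    (hlt : ∀ e ∈ E, Tstar e < T e)
    (heq : ∀ e ∉ E, Tstar e = T e)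
    (hgeostar : IsGeodesic Tstar 0 x γstar) :
    ∀ e ∈ E, e ∈ pathEdges γstar := by
  classical
  intro e0 he0
  by_contra hnot
  set Δ : Sym2 (Vtx d) → ℝ := fun f => T f - Tstar f with hΔ
  have hΔnonneg : ∀ f, 0 ≤ Δ f := by
    intro f
    by_cases hf : f ∈ E
    · exact le_of_lt (sub_pos.2 (hlt f hf))
    · simp [hΔ, heq f hf]
  have hΔzero : ∀ f ∉ E, Δ f = 0 := by
    intro f hf; simp [hΔ, heq f hf]
  have hΔpos : 0 < Δ e0 := sub_pos.2 (hlt e0 he0)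
  -- reduce γstar to a vertex-simple Tstar-geodesic
  obtain ⟨π0, hgeo0, hnd0, hsub0⟩ :=
    Stmt6Aux.reduce Tstar x γstar.length γstar le_rfl hgeostar
  have he0π0 : e0 ∉ pathEdges π0 := fun h => hnot (hsub0 e0 h)
  -- difference of weights as a sum of Δ over the edges
  have hdiff : ∀ l : List (Sym2 (Vtx d)),
      (l.map T).sum - (l.map Tstar).sum = (l.map Δ).sum := by
    intro l
    induction l with
    | nil => simp
    | cons a t iht =>
      simp only [List.map_cons, List.sum_cons]
      have : Δ a = T a - Tstar a := rfl
      linarith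
  -- lower bound on the Δ-sum of γ
  have hγsum : (∑ e ∈ E, Δ e) ≤ ((pathEdges γ).map Δ).sum := by
    rw [Finset.sum_list_map_count]
    have hEsub : E ⊆ (pathEdges γ).toFinset := by
      intro e he; exact List.mem_toFinset.2 (hE e he)
    calc (∑ e ∈ E, Δ e) ≤ ∑ e ∈ (pathEdges γ).toFinset, Δ e :=
          Finset.sum_le_sum_of_subset_of_nonneg hEsub (fun i _ _ => hΔnonneg i)
      _ ≤ ∑ e ∈ (pathEdges γ).toFinset, (pathEdges γ).count e • Δ e := by
          refine Finset.sum_le_sum (fun i hi => ?_)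
          have hc : 1 ≤ (pathEdges γ).count i :=
            List.count_pos_iff.2 (List.mem_toFinset.1 hi)
          calc Δ i = 1 • Δ i := (one_smul _ _).symm
            _ ≤ (pathEdges γ).count i • Δ i :=
                smul_le_smul_of_nonneg_right hc (hΔnonneg i)
  -- upper bound on the Δ-sum of π0
  have hπ0sum : ((pathEdges π0).map Δ).sum ≤ (∑ e ∈ E, Δ e) - Δ e0 := by
    rw [← List.sum_toFinset Δ (Stmt6Aux.nodup_pathEdges hnd0)]
    have hstep : ∑ e ∈ (pathEdges π0).toFinset, Δ e
        = ∑ e ∈ (pathEdges π0).toFinset.filter (· ∈ E), Δ e := by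
      refine (Finset.sum_subset (Finset.filter_subset _ _) ?_).symm
      intro f hf hfn
      refine hΔzero f ?_
      intro hfE
      exact hfn (Finset.mem_filter.2 ⟨hf, hfE⟩)
    rw [hstep]
    have hsubset : (pathEdges π0).toFinset.filter (· ∈ E) ⊆ E.erase e0 := by
      intro f hf
      obtain ⟨hf1, hf2⟩ := Finset.mem_filter.1 hf
      refine Finset.mem_erase.2 ⟨?_, hf2⟩
      intro hfe
      exact he0π0 (by simpa [hfe] using List.mem_toFinset.1 hf1)
    calc ∑ e ∈ (pathEdges π0).toFinset.filter (· ∈ E), Δ e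
        ≤ ∑ e ∈ E.erase e0, Δ e :=
          Finset.sum_le_sum_of_subset_of_nonneg hsubset (fun i _ _ => hΔnonneg i)
      _ = (∑ e ∈ E, Δ e) - Δ e0 := by
          have := Finset.add_sum_erase E Δ he0
          linarith
  -- combine the four inequalities
  have h1 : pathWeight T γ - pathWeight Tstar γ ≥ ∑ e ∈ E, Δ e := by
    have := hdiff (pathEdges γ)
    unfold pathWeight
    linarith
  have h2 : pathWeight T π0 - pathWeight Tstar π0 ≤ (∑ e ∈ E, Δ e) - Δ e0 := by
    have := hdiff (pathEdges π0)
    unfold pathWeight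
    linarith
  have h3 : pathWeight T γ ≤ pathWeight T π0 := hgeo.2 π0 hgeo0.1
  have h4 : pathWeight Tstar π0 ≤ pathWeight Tstar γ := hgeo0.2 γ hgeo.1
  linarith
end

section
/- Let t_max > 0, r, δ > 0, and let r₃ < r₄ be positive integers with r₄ > r₃(r+δ+t_max)/(r+δ). Suppose in a weighted graph that: (a) t(u₀, v₀) ≤ 2 r₃ N t_max for vertices u₀, v₀ in an inner ball B₃ of ℓ¹-radius r₃N around c; (b) every path contained in the outer ball B₄ of ℓ¹-radius r₄N around c between endpoints at ℓ¹-distance ≥ N has weight at least (r+δ) times that distance. Then every geodesic between u₀ and v₀ is entirely contained in B₄. (Key inequality: 2(r₄−r₃)N(r+δ) > 2 r₃ N t_max.) -/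
private lemma dist1_comm {d : ℕ} (a b : Vtx d) : dist1 a b = dist1 b a :=
  Finset.sum_congr rfl (fun i _ => abs_sub_comm _ _)

private lemma abs_dist1_sub {d : ℕ} (a b c : Vtx d) : |dist1 a c - dist1 b c| ≤ dist1 a b := by
  unfold dist1
  rw [← Finset.sum_sub_distrib]
  refine le_trans (Finset.abs_sum_le_sum_abs _ _) (Finset.sum_le_sum fun i _ => ?_)
  have h := abs_abs_sub_abs_le_abs_sub (a i - c i) (b i - c i)
  have e : (a i - c i) - (b i - c i) = a i - b i := by ring
  rwa [e] at h

private lemma pathEdges_cons₂ {d : ℕ} (x y : Vtx d) (t : List (Vtx d)) :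
    pathEdges (x :: y :: t) = s(x, y) :: pathEdges (y :: t) := rfl

private lemma pathEdges_drop {d : ℕ} (π : List (Vtx d)) (i : ℕ) :
    pathEdges (π.drop i) = (pathEdges π).drop i := by
  unfold pathEdges
  rw [List.drop_zipWith]
  congr 1
  rw [List.tail_drop, ← List.drop_one, List.drop_drop, Nat.add_comm]

private lemma pathEdges_take {d : ℕ} : ∀ (π : List (Vtx d)) (m : ℕ),
    pathEdges (π.take (m + 1)) = (pathEdges π).take m
  | [], m => by simp [pathEdges]
  | [x], m => by simp [pathEdges]
  | x :: y :: t, 0 => by simp [pathEdges]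
  | x :: y :: t, m + 1 => by
    have ih := pathEdges_take (y :: t) m
    show pathEdges (x :: y :: List.take m t) = _
    rw [pathEdges_cons₂, pathEdges_cons₂]
    show _ = s(x, y) :: (pathEdges (y :: t)).take m
    rw [← ih]
    rfl

private lemma sum_drop_le (F : List ℝ) (hF : ∀ x ∈ F, 0 ≤ x) (n : ℕ) :
    (F.drop n).sum ≤ F.sum := by
  have h0 : 0 ≤ (F.take n).sum := List.sum_nonneg fun x hx => hF x (List.take_subset _ _ hx)
  have := List.sum_take_add_sum_drop F n
  linarith

private lemma sum_take_le (F : List ℝ) (hF : ∀ x ∈ F, 0 ≤ x) (n : ℕ) :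
    (F.take n).sum ≤ F.sum := by
  have h0 : 0 ≤ (F.drop n).sum := List.sum_nonneg fun x hx => hF x (List.drop_subset _ _ hx)
  have := List.sum_take_add_sum_drop F n
  linarith

private lemma two_seg_sum (F : List ℝ) (hF : ∀ x ∈ F, 0 ≤ x) (i a i' b : ℕ) (h : i + a ≤ i') :
    ((F.drop i).take a).sum + ((F.drop i').take b).sum ≤ F.sum := by
  have hFi' : ∀ x ∈ F.drop i', 0 ≤ x := fun x hx => hF x (List.drop_subset _ _ hx)
  have hFia : ∀ x ∈ F.drop (i + a), 0 ≤ x := fun x hx => hF x (List.drop_subset _ _ hx)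
  have e1 : ((F.drop i).take a).sum + (F.drop (i + a)).sum = (F.drop i).sum := by
    rw [← List.sum_take_add_sum_drop (F.drop i) a, List.drop_drop]
  have e2 : F.drop i' = (F.drop (i + a)).drop (i' - (i + a)) := by
    rw [List.drop_drop]; congr 1; omega
  have h3 : ((F.drop i').take b).sum ≤ (F.drop i').sum := sum_take_le _ hFi' b
  have h4 : (F.drop i').sum ≤ (F.drop (i + a)).sum := by
    rw [e2]; exact sum_drop_le _ hFia _
  have h5 : (F.drop i).sum ≤ F.sum := sum_drop_le F hF i
  linarith

private lemma isLatPath_seg {d : ℕ} (π : List (Vtx d))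
    (hc : List.Chain' (fun u v => dist1 u v = 1) π) (i m : ℕ) (hm : 1 ≤ m)
    (him : i + m ≤ π.length) :
    IsLatPath ((π.drop i).take m) (π.getD i (fun _ => 0)) (π.getD (i + m - 1) (fun _ => 0)) := by
  have hlen : ((π.drop i).take m).length = m := by
    simp only [List.length_take, List.length_drop]; omega
  have hgetseg : ∀ n (hn : n < m), ((π.drop i).take m)[n]? = some (π[i + n]'(by omega)) := by
    intro n hn
    rw [List.getElem?_take, if_pos hn, List.getElem?_drop, List.getElem?_eq_getElem (by omega)]
  refine ⟨?_, ?_, ?_, ?_⟩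
  · intro h; rw [h] at hlen; simp at hlen; omega
  · rw [List.head?_eq_getElem?, hgetseg 0 (by omega),
      List.getD_eq_getElem _ _ (by omega : i < π.length)]
    simp
  · have e : i + m - 1 = i + (m - 1) := by omega
    rw [List.getLast?_eq_getElem?, hlen, hgetseg (m - 1) (by omega),
      List.getD_eq_getElem _ _ (by omega : i + m - 1 < π.length)]
    simp only [e]
  · exact hc.infix ((List.take_prefix _ _).isInfix.trans (List.drop_suffix i π).isInfix)

private lemma mem_seg {α : Type*} (l : List α) (d₀ : α) (i m : ℕ) (z : α)
    (hz : z ∈ (l.drop i).take m) :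
    ∃ n, i ≤ n ∧ n < i + m ∧ n < l.length ∧ l.getD n d₀ = z := by
  obtain ⟨n', hn', he⟩ := List.mem_iff_getElem.1 hz
  have hlen : ((l.drop i).take m).length = min m (l.length - i) := by simp
  rw [hlen] at hn'
  refine ⟨i + n', by omega, by omega, by omega, ?_⟩
  rw [List.getD_eq_getElem _ _ (by omega)]
  have h1 : ((l.drop i).take m)[n']? = some (l[i + n']'(by omega)) := by
    rw [List.getElem?_take, if_pos (by omega), List.getElem?_drop,
      List.getElem?_eq_getElem (by omega)]
  rw [List.getElem?_eq_getElem (by rw [hlen]; omega)] at h1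
  rw [← he]
  exact (Option.some.inj h1).symm

set_option maxHeartbeats 1000000 in
/-- under (a) a cheap connection inside `B₃` and (b) a linear lower
bound for paths inside `B₄`, every geodesic between `u₀, v₀ ∈ B₃` stays in `B₄`. -/
theorem stmt14 {d : ℕ} (T : Sym2 (Vtx d) → ℝ) (hT : ∀ e, 0 ≤ T e)
    (tmax r δ : ℝ) (htmax : 0 < tmax) (hr : 0 < r) (hδ : 0 < δ)
    (r3 r4 N : ℕ) (hr3 : 0 < r3) (h34 : r3 < r4) (hN : 0 < N)
    (hr4 : (r3 : ℝ) * (r + δ + tmax) / (r + δ) < (r4 : ℝ))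
    (c u0 v0 : Vtx d)
    (hu0 : ((dist1 u0 c : ℤ) : ℝ) ≤ r3 * N) (hv0 : ((dist1 v0 c : ℤ) : ℝ) ≤ r3 * N)
    (ha : ∃ π, IsLatPath π u0 v0 ∧ pathWeight T π ≤ 2 * r3 * N * tmax)
    (hb : ∀ (a b : Vtx d) (π : List (Vtx d)), IsLatPath π a b →
      (∀ z ∈ π, ((dist1 z c : ℤ) : ℝ) ≤ r4 * N) → (N : ℝ) ≤ ((dist1 a b : ℤ) : ℝ) →
      (r + δ) * ((dist1 a b : ℤ) : ℝ) ≤ pathWeight T π) :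
    ∀ π, IsGeodesic T u0 v0 π → ∀ z ∈ π, ((dist1 z c : ℤ) : ℝ) ≤ r4 * N := by
  intro π hgeo z hzmem
  by_contra hzc
  push_neg at hzc
  obtain ⟨⟨hne, hhead, hlast, hchain⟩, hmin⟩ := hgeo
  set L : ℕ := π.length with hL
  set g : ℕ → Vtx d := fun m => π.getD m (fun _ => 0) with hg
  set f : ℕ → ℤ := fun m => dist1 (g m) c with hf
  set A : ℤ := (r3 : ℤ) * N with hA
  set B : ℤ := (r4 : ℤ) * N with hB
  have hL1 : 1 ≤ L := by
    rw [hL]; cases π with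
    | nil => exact absurd rfl hne
    | cons a t => simp
  have hBr : ((B : ℤ) : ℝ) = (r4 : ℝ) * N := by rw [hB]; push_cast; ring
  have hAr : ((A : ℤ) : ℝ) = (r3 : ℝ) * N := by rw [hA]; push_cast; ring
  -- endpoints
  have hg0 : g 0 = u0 := by
    have h0 : (0 : ℕ) < L := by omega
    rw [List.head?_eq_getElem?, List.getElem?_eq_getElem h0] at hhead
    rw [hg]; simp only
    rw [List.getD_eq_getElem _ _ h0]
    exact Option.some.inj hhead
  have hgL : g (L - 1) = v0 := by
    have h0 : L - 1 < L := by omega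
    rw [List.getLast?_eq_getElem?, List.getElem?_eq_getElem h0] at hlast
    rw [hg]; simp only
    rw [List.getD_eq_getElem _ _ h0]
    exact Option.some.inj hlast
  -- the bad index
  obtain ⟨k, hkL, hk⟩ := List.mem_iff_getElem.1 hzmem
  have hgk : g k = z := by
    rw [hg]; simp only; rw [List.getD_eq_getElem _ _ hkL]; exact hk
  -- integer bounds
  have hAB : A + N ≤ B := by
    have h1 : (r3 : ℤ) + 1 ≤ (r4 : ℤ) := by exact_mod_cast h34
    have hN' : (1 : ℤ) ≤ (N : ℤ) := by exact_mod_cast hN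
    rw [hA, hB]; nlinarith
  have hN1 : (1 : ℤ) ≤ (N : ℤ) := by exact_mod_cast hN
  have hf0 : f 0 ≤ A := by
    have h1 : ((dist1 u0 c : ℤ) : ℝ) ≤ ((A : ℤ) : ℝ) := by rw [hAr]; exact hu0
    have h2 : dist1 u0 c ≤ A := by exact_mod_cast h1
    rw [hf]; simp only [hg0]; exact h2
  have hfL : f (L - 1) ≤ A := by
    have h1 : ((dist1 v0 c : ℤ) : ℝ) ≤ ((A : ℤ) : ℝ) := by rw [hAr]; exact hv0
    have h2 : dist1 v0 c ≤ A := by exact_mod_cast h1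
    rw [hf]; simp only [hgL]; exact h2
  have hfk : B < f k := by
    have h1 : ((B : ℤ) : ℝ) < ((dist1 z c : ℤ) : ℝ) := by rw [hBr]; exact hzc
    have h2 : B < dist1 z c := by exact_mod_cast h1
    rw [hf]; simp only [hgk]; exact h2
  -- single step changes f by at most 1
  have hstep : ∀ m, m + 1 < L → |f (m + 1) - f m| ≤ 1 := by
    intro m hm
    have h1 := List.isChain_iff_getElem.1 hchain m (by rw [← hL]; omega)
    have e1 : g m = π[m]'(by omega) := by
      rw [hg]; simp only; rw [List.getD_eq_getElem _ _ (by omega)]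
    have e2 : g (m + 1) = π[m + 1]'(by omega) := by
      rw [hg]; simp only; rw [List.getD_eq_getElem _ _ (by omega)]
    have h2 : dist1 (g m) (g (m + 1)) = 1 := by rw [e1, e2]; exact h1
    calc |f (m + 1) - f m| ≤ dist1 (g (m + 1)) (g m) := abs_dist1_sub _ _ _
      _ = 1 := by rw [dist1_comm]; exact h2
  -- the indices where f exceeds B
  set S : Finset ℕ := (Finset.range L).filter (fun m => B < f m) with hS
  have hkS : k ∈ S := by
    rw [hS, Finset.mem_filter, Finset.mem_range]; exact ⟨hkL, hfk⟩
  have hSne : S.Nonempty := ⟨k, hkS⟩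
  set k₁ : ℕ := S.min' hSne with hk₁
  set k₂ : ℕ := S.max' hSne with hk₂
  have hk₁S : k₁ < L ∧ B < f k₁ := by
    have hmem : k₁ ∈ S := by rw [hk₁]; exact S.min'_mem hSne
    rw [hS, Finset.mem_filter, Finset.mem_range] at hmem; exact hmem
  have hk₂S : k₂ < L ∧ B < f k₂ := by
    have hmem : k₂ ∈ S := by rw [hk₂]; exact S.max'_mem hSne
    rw [hS, Finset.mem_filter, Finset.mem_range] at hmem; exact hmem
  have hk₁k₂ : k₁ ≤ k₂ := Finset.min'_le S k₂ (S.max'_mem hSne)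
  have hbefore : ∀ m, m < k₁ → f m ≤ B := by
    intro m hm
    by_contra hmb
    push_neg at hmb
    have hmS : m ∈ S := by
      rw [hS, Finset.mem_filter, Finset.mem_range]; exact ⟨by omega, hmb⟩
    have := Finset.min'_le S m hmS
    omega
  have hafter : ∀ m, k₂ < m → m < L → f m ≤ B := by
    intro m hm hmL
    by_contra hmb
    push_neg at hmb
    have hmS : m ∈ S := by
      rw [hS, Finset.mem_filter, Finset.mem_range]; exact ⟨hmL, hmb⟩
    have := Finset.le_max' S m hmS
    omega
  have hk₁0 : 1 ≤ k₁ := by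
    rcases Nat.eq_zero_or_pos k₁ with h | h
    · exfalso; have := hk₁S.2; rw [h] at this; omega
    · exact h
  have hk₂L : k₂ + 1 < L := by
    have h1 := hk₂S.1
    rcases Nat.lt_or_ge (k₂ + 1) L with h | h
    · exact h
    · exfalso
      have hEq : k₂ = L - 1 := by omega
      have h2 := hk₂S.2
      have h4 : f k₂ ≤ A := by rw [hEq]; exact hfL
      omega
  -- boundary values
  have hfk1 : f (k₁ - 1) = B := by
    have hb1 : f (k₁ - 1) ≤ B := hbefore (k₁ - 1) (by omega)
    have hs := hstep (k₁ - 1) (by omega)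
    have e : k₁ - 1 + 1 = k₁ := by omega
    rw [e] at hs
    have h2 := hk₁S.2
    have h3 := abs_le.1 hs
    omega
  have hfk2 : f (k₂ + 1) = B := by
    have hb1 : f (k₂ + 1) ≤ B := hafter (k₂ + 1) (by omega) hk₂L
    have hs := hstep k₂ (by omega)
    have h2 := hk₂S.2
    have h3 := abs_le.1 hs
    omega
  -- the entry index i and the exit index j
  set T₁ : Finset ℕ := (Finset.range k₁).filter (fun m => f m ≤ A) with hT₁
  have hT₁ne : T₁.Nonempty := ⟨0, by rw [hT₁, Finset.mem_filter, Finset.mem_range]; exact ⟨by omega, hf0⟩⟩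
  set i : ℕ := T₁.max' hT₁ne with hi
  have hiT : i < k₁ ∧ f i ≤ A := by
    have hmem : i ∈ T₁ := by rw [hi]; exact T₁.max'_mem hT₁ne
    rw [hT₁, Finset.mem_filter, Finset.mem_range] at hmem; exact hmem
  set T₂ : Finset ℕ := (Finset.range L).filter (fun m => k₂ < m ∧ f m ≤ A) with hT₂
  have hT₂ne : T₂.Nonempty := by
    refine ⟨L - 1, ?_⟩
    rw [hT₂, Finset.mem_filter, Finset.mem_range]
    refine ⟨by omega, ?_, hfL⟩
    have h2 := hk₂S.2
    rcases Nat.lt_or_ge k₂ (L - 1) with h | h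
    · exact h
    · exfalso
      have : k₂ = L - 1 := by omega
      rw [this] at h2; omega
  set j : ℕ := T₂.min' hT₂ne with hj
  have hjT : j < L ∧ k₂ < j ∧ f j ≤ A := by
    have hmem : j ∈ T₂ := by rw [hj]; exact T₂.min'_mem hT₂ne
    rw [hT₂, Finset.mem_filter, Finset.mem_range] at hmem
    exact ⟨hmem.1, hmem.2.1, hmem.2.2⟩
  -- the two crossing segments
  set seg1 : List (Vtx d) := (π.drop i).take (k₁ - i) with hseg1def
  set seg2 : List (Vtx d) := (π.drop (k₂ + 1)).take (j - k₂) with hseg2def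
  have hseg1 : IsLatPath seg1 (g i) (g (k₁ - 1)) := by
    have h := isLatPath_seg π hchain i (k₁ - i) (by omega) (by rw [← hL]; omega)
    have e : i + (k₁ - i) - 1 = k₁ - 1 := by omega
    rw [e] at h
    exact h
  have hseg2 : IsLatPath seg2 (g (k₂ + 1)) (g j) := by
    have h := isLatPath_seg π hchain (k₂ + 1) (j - k₂) (by omega) (by rw [← hL]; omega)
    have e : k₂ + 1 + (j - k₂) - 1 = j := by omega
    rw [e] at h
    exact h
  -- all vertices of the segments are in B₄
  have hfB_cast : ∀ n, n < L → f n ≤ B → ((dist1 (g n) c : ℤ) : ℝ) ≤ r4 * N := by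
    intro n _ hn
    have h1 : ((dist1 (g n) c : ℤ) : ℝ) ≤ ((B : ℤ) : ℝ) := by exact_mod_cast hn
    rw [hBr] at h1; exact h1
  have hmem1 : ∀ z' ∈ seg1, ((dist1 z' c : ℤ) : ℝ) ≤ r4 * N := by
    intro z' hz'
    obtain ⟨n, hn1, hn2, hn3, hn4⟩ := mem_seg π (fun _ => 0) i (k₁ - i) z' hz'
    have hgn : g n = z' := by rw [hg]; simp only; exact hn4
    rw [← hgn]
    exact hfB_cast n (by omega) (hbefore n (by omega))
  have hmem2 : ∀ z' ∈ seg2, ((dist1 z' c : ℤ) : ℝ) ≤ r4 * N := by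
    intro z' hz'
    obtain ⟨n, hn1, hn2, hn3, hn4⟩ := mem_seg π (fun _ => 0) (k₂ + 1) (j - k₂) z' hz'
    have hgn : g n = z' := by rw [hg]; simp only; exact hn4
    rw [← hgn]
    exact hfB_cast n (by omega) (hafter n (by omega) (by omega))
  -- the endpoints of the segments are far apart
  have hdist1 : B - A ≤ dist1 (g i) (g (k₁ - 1)) := by
    have h1 : |f (k₁ - 1) - f i| ≤ dist1 (g (k₁ - 1)) (g i) := abs_dist1_sub (g (k₁ - 1)) (g i) c
    have h4 := (le_abs_self (f (k₁ - 1) - f i)).trans h1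
    rw [dist1_comm]
    have h3 := hiT.2
    linarith [hfk1.ge, hfk1.le]
  have hdist2 : B - A ≤ dist1 (g (k₂ + 1)) (g j) := by
    have h1 : |f (k₂ + 1) - f j| ≤ dist1 (g (k₂ + 1)) (g j) := abs_dist1_sub (g (k₂ + 1)) (g j) c
    have h4 := (le_abs_self (f (k₂ + 1) - f j)).trans h1
    have h3 := hjT.2.2
    linarith [hfk2.ge, hfk2.le]
  have hBA_cast : (N : ℝ) ≤ ((B - A : ℤ) : ℝ) := by
    have : (N : ℤ) ≤ B - A := by omega
    exact_mod_cast this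
  -- lower bounds for the weights
  have hw1 : (r + δ) * ((B - A : ℤ) : ℝ) ≤ pathWeight T seg1 := by
    have hd : (N : ℝ) ≤ ((dist1 (g i) (g (k₁ - 1)) : ℤ) : ℝ) := by
      refine hBA_cast.trans ?_
      exact_mod_cast hdist1
    have hbb := hb (g i) (g (k₁ - 1)) seg1 hseg1 hmem1 hd
    have hmono : ((B - A : ℤ) : ℝ) ≤ ((dist1 (g i) (g (k₁ - 1)) : ℤ) : ℝ) := by
      exact_mod_cast hdist1
    calc (r + δ) * ((B - A : ℤ) : ℝ) ≤ (r + δ) * ((dist1 (g i) (g (k₁ - 1)) : ℤ) : ℝ) :=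
          mul_le_mul_of_nonneg_left hmono (by linarith)
      _ ≤ pathWeight T seg1 := hbb
  have hw2 : (r + δ) * ((B - A : ℤ) : ℝ) ≤ pathWeight T seg2 := by
    have hd : (N : ℝ) ≤ ((dist1 (g (k₂ + 1)) (g j) : ℤ) : ℝ) := by
      refine hBA_cast.trans ?_
      exact_mod_cast hdist2
    have hbb := hb (g (k₂ + 1)) (g j) seg2 hseg2 hmem2 hd
    have hmono : ((B - A : ℤ) : ℝ) ≤ ((dist1 (g (k₂ + 1)) (g j) : ℤ) : ℝ) := by
      exact_mod_cast hdist2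
    calc (r + δ) * ((B - A : ℤ) : ℝ) ≤ (r + δ) * ((dist1 (g (k₂ + 1)) (g j) : ℤ) : ℝ) :=
          mul_le_mul_of_nonneg_left hmono (by linarith)
      _ ≤ pathWeight T seg2 := hbb
  -- weight of the two segments is at most the total weight
  set F : List ℝ := (pathEdges π).map T with hF
  have hFpos : ∀ x ∈ F, 0 ≤ x := by
    intro x hx
    rw [hF, List.mem_map] at hx
    obtain ⟨e, _, he⟩ := hx
    rw [← he]; exact hT e
  have hsplit : pathWeight T seg1 + pathWeight T seg2 ≤ pathWeight T π := by
    have e1 : pathWeight T seg1 = ((F.drop i).take (k₁ - i - 1)).sum := by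
      rw [pathWeight, hseg1def, show (k₁ - i) = (k₁ - i - 1) + 1 from by omega,
        pathEdges_take, pathEdges_drop, List.map_take, List.map_drop, hF]
      simp
    have e2 : pathWeight T seg2 = ((F.drop (k₂ + 1)).take (j - k₂ - 1)).sum := by
      rw [pathWeight, hseg2def, show (j - k₂) = (j - k₂ - 1) + 1 from by omega,
        pathEdges_take, pathEdges_drop, List.map_take, List.map_drop, hF]
      simp
    have e3 : pathWeight T π = F.sum := by rw [pathWeight, hF]
    rw [e1, e2, e3]
    exact two_seg_sum F hFpos i (k₁ - i - 1) (k₂ + 1) (j - k₂ - 1) (by omega)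
  -- geodesic upper bound
  obtain ⟨π₀, hπ₀, hw₀⟩ := ha
  have hgeo_bound : pathWeight T π ≤ 2 * r3 * N * tmax := (hmin π₀ hπ₀).trans hw₀
  -- final contradiction
  have hrd : (0 : ℝ) < r + δ := by linarith
  have h1 : (r3 : ℝ) * (r + δ + tmax) < r4 * (r + δ) := by
    have := (div_lt_iff₀ hrd).1 hr4
    linarith
  have hN0 : (0 : ℝ) < N := by exact_mod_cast hN
  have hBAr : ((B - A : ℤ) : ℝ) = ((r4 : ℝ) - r3) * N := by
    push_cast [hA, hB]; ring
  have h2 : (r3 : ℝ) * tmax < ((r4 : ℝ) - r3) * (r + δ) := by linarith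
  have h3 : 2 * (r3 : ℝ) * N * tmax < 2 * ((r + δ) * (((r4 : ℝ) - r3) * N)) := by
    have hm := mul_lt_mul_of_pos_right h2 hN0
    nlinarith [hm]
  rw [hBAr] at hw1 hw2
  linarith
end
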